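/- arXiv:2009.12487 — 4 statements merged into one kernel-verified Lean document; each statement's English description precedes it below -/
import Mathlib

section
/- Let β ∈ ℝ^p with β ≠ 0 and k ∈ {1,…,p}, and define w_k(β) = −(1/2)(‖β‖₂² I + 2ββᵀ)^{-1} e_k, where e_k is the k-th standard basis vector. Then w_k(β) = −(1/(2‖β‖₂²)) e_k + (β_k/(3‖β‖₂⁴)) β, and consequently supp(w_k(β)) ⊆ supp(β) ∪ {k}. -/
open MeasureTheory ProbabilityTheory

noncomputable section

/-- Euclidean dot product on `ℝ^p`. -/
def dot {p : ℕ} (u v : Fin p → ℝ) : ℝ := ∑ i, u i * v i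

/-- Euclidean norm on `ℝ^p`. -/
def nrm {p : ℕ} (v : Fin p → ℝ) : ℝ := Real.sqrt (∑ i, (v i)^2)

/-- The matrix `‖b‖₂² I + 2 b bᵀ` (population Fisher information / Hessian). -/
def fisherM {p : ℕ} (b : Fin p → ℝ) : Matrix (Fin p) (Fin p) ℝ :=
  (nrm b ^ 2) • (1 : Matrix (Fin p) (Fin p) ℝ) + (2:ℝ) • Matrix.vecMulVec b b

/-- The correction direction `w_k(b) = -(1/2) (‖b‖₂² I + 2 b bᵀ)⁻¹ e_k`. -/
def wvec {p : ℕ} (b : Fin p → ℝ) (k : Fin p) : Fin p → ℝ :=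
  (-(1/2) : ℝ) • (fisherM b)⁻¹.mulVec (Pi.single k 1)

/-- Operator (spectral) norm of a matrix acting on Euclidean space. -/
def opNorm {p : ℕ} (A : Matrix (Fin p) (Fin p) ℝ) : ℝ :=
  ‖LinearMap.toContinuousLinearMap (Matrix.toEuclideanLin A)‖

/-- Restriction of a vector to a coordinate set `S` (zero outside `S`). -/
def restr {p : ℕ} (S : Finset (Fin p)) (v : Fin p → ℝ) : Fin p → ℝ :=
  fun i => if i ∈ S then v i else 0

/-- Gradient of the phase-retrieval objective
`f(b) = (1/(4n)) ∑ⱼ ((xⱼᵀb)² - yⱼ)²`, namely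
`∇f(b) = (1/n) ∑ⱼ ((xⱼᵀb)² - yⱼ)(xⱼᵀb) xⱼ`. -/
def gradf {p n : ℕ} (x : Fin n → Fin p → ℝ) (y : Fin n → ℝ) (b : Fin p → ℝ) : Fin p → ℝ :=
  (1/(n:ℝ)) • ∑ j, (((dot (x j) b)^2 - y j) * dot (x j) b) • x j

lemma vmv_mul {p : ℕ} (β : Fin p → ℝ) :
    Matrix.vecMulVec β β * Matrix.vecMulVec β β = (∑ i, (β i)^2) • Matrix.vecMulVec β β := by
  ext i j
  simp only [Matrix.mul_apply, Matrix.vecMulVec_apply, Matrix.smul_apply, smul_eq_mul,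
    Finset.sum_mul]
  exact Finset.sum_congr rfl fun l _ => by ring

/-- Explicit formula `w_k(β) = −(1/(2‖β‖₂²)) e_k + (β_k/(3‖β‖₂⁴)) β` for the
correction direction, and the consequent support containment
`supp(w_k(β)) ⊆ supp(β) ∪ {k}`. -/
theorem stmt_7 {p : ℕ} (β : Fin p → ℝ) (hβ : β ≠ 0) (k : Fin p) :
    wvec β k = (-(1 / (2 * nrm β ^ 2))) • (Pi.single k 1 : Fin p → ℝ)
        + (β k / (3 * nrm β ^ 4)) • β ∧
    Function.support (wvec β k) ⊆ Function.support β ∪ {k} := by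
  classical
  set s : ℝ := ∑ i, (β i)^2 with hs_def
  have hs0 : 0 < s := by
    obtain ⟨i, hi⟩ := Function.ne_iff.mp hβ
    exact Finset.sum_pos' (fun j _ => sq_nonneg _)
      ⟨i, Finset.mem_univ i, by simpa using sq_pos_of_ne_zero hi⟩
  have hn : nrm β ^ 2 = s := Real.sq_sqrt (Finset.sum_nonneg fun i _ => sq_nonneg _)
  set c : ℝ := -(2/(3*s^2)) with hc_def
  set B : Matrix (Fin p) (Fin p) ℝ :=
    (s⁻¹) • (1 : Matrix (Fin p) (Fin p) ℝ) + c • Matrix.vecMulVec β β with hB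
  have hright : fisherM β * B = 1 := by
    have h1 : fisherM β * B = (s * s⁻¹) • (1 : Matrix (Fin p) (Fin p) ℝ)
        + (s * c + 2 * s⁻¹ + 2 * (c * s)) • Matrix.vecMulVec β β := by
      simp only [fisherM, hn, hB, Matrix.add_mul, Matrix.mul_add, smul_mul_assoc,
        Matrix.mul_smul, mul_smul_comm, mul_one, one_mul, vmv_mul, ← hs_def, smul_smul]
      module
    rw [h1, mul_inv_cancel₀ hs0.ne']
    have h2 : s * c + 2 * s⁻¹ + 2 * (c * s) = 0 := by
      rw [hc_def]; field_simp; ring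
    rw [h2, zero_smul, add_zero, one_smul]
  have hBinv : (fisherM β)⁻¹ = B := Matrix.inv_eq_right_inv hright
  have hmain : wvec β k = (-(1 / (2 * nrm β ^ 2))) • (Pi.single k 1 : Fin p → ℝ)
      + (β k / (3 * nrm β ^ 4)) • β := by
    funext i
    have hBik : (B.mulVec (Pi.single k 1)) i = B i k := by
      simp [Matrix.mulVec, dotProduct, Pi.single_apply, mul_ite]
    have hn4 : nrm β ^ 4 = s ^ 2 := by
      have : nrm β ^ 4 = (nrm β ^ 2) ^ 2 := by ring
      rw [this, hn]
    simp only [wvec, hBinv, Pi.smul_apply, smul_eq_mul, hBik, hB, Matrix.add_apply,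
      Matrix.smul_apply, Matrix.one_apply, Matrix.vecMulVec_apply, smul_eq_mul,
      Pi.add_apply, Pi.single_apply, hn, hn4, hc_def]
    by_cases h : i = k <;> simp [h, Matrix.vecMulVec_apply] <;> field_simp <;> ring
  refine ⟨hmain, fun i hi => ?_⟩
  by_contra h
  simp only [Set.mem_union, Set.mem_singleton_iff, Function.mem_support, not_or, not_not] at h
  apply hi
  have hik : i ≠ k := h.2
  simp [hmain, h.1, Pi.single_apply, hik]
end
end

section
/- Let n, p be positive integers, k ∈ {1,…,p}, and let x_1,…,x_n ∈ ℝ^p, ε_1,…,ε_n ∈ ℝ, β, β̃ ∈ ℝ^p and w, w̃ ∈ ℝ^p be arbitrary. Set y_j = (x_jᵀβ)² + ε_j, Δ = β̃ − β, and β̂_k = β̃_k + w̃ᵀ [ (1/n) Σ_{j=1}^n ((x_jᵀβ̃)² − y_j)(x_jᵀβ̃) x_j ]. Then β̂_k − β_k = e_kᵀΔ + (2/n) Σ_j (x_jᵀΔ)(x_jᵀ w)(x_jᵀβ)² + (2/n) Σ_j (x_jᵀΔ)(x_jᵀ(w̃ − w))(x_jᵀβ)² + (1/n) Σ_j (x_jᵀΔ)³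 (x_jᵀ w̃) + (3/n) Σ_j (x_jᵀΔ)² (x_jᵀ w̃)(x_jᵀβ) − (1/n) Σ_j ε_j (x_jᵀβ̃)(x_jᵀ w̃). -/
open MeasureTheory ProbabilityTheory

noncomputable section

lemma dot_sub' {p : ℕ} (u a b : Fin p → ℝ) : dot u (a - b) = dot u a - dot u b := by
  simp [dot, mul_sub, Finset.sum_sub_distrib]

lemma dot_grad {p n : ℕ} (wt : Fin p → ℝ) (x : Fin n → Fin p → ℝ) (y : Fin n → ℝ)
    (b : Fin p → ℝ) :
    dot wt (gradf x y b)
      = (1/(n:ℝ)) * ∑ j, ((dot (x j) b)^2 - y j) * dot (x j) b * dot (x j) wt := by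
  simp only [dot, gradf, Pi.smul_apply, Finset.sum_apply, smul_eq_mul, Finset.mul_sum]
  rw [Finset.sum_comm]
  congr 1; ext j; congr 1; ext i; ring

/-- Exact algebraic decomposition of the error of the debiased estimator
`β̂_k = β̃_k + w̃ᵀ∇f(β̃)` in the model `y_j = (x_jᵀβ)² + ε_j`. -/
theorem stmt_11 {n p : ℕ} (hn : 0 < n) (k : Fin p)
    (x : Fin n → Fin p → ℝ) (ε : Fin n → ℝ) (β βt w wt : Fin p → ℝ) :
    let y : Fin n → ℝ := fun j => dot (x j) β ^ 2 + ε j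
    let Δ : Fin p → ℝ := βt - β
    let βhat : ℝ := βt k + dot wt (gradf x y βt)
    βhat - β k
      = Δ k + (2/(n:ℝ)) * ∑ j, dot (x j) Δ * dot (x j) w * dot (x j) β ^ 2
        + (2/(n:ℝ)) * ∑ j, dot (x j) Δ * dot (x j) (wt - w) * dot (x j) β ^ 2
        + (1/(n:ℝ)) * ∑ j, dot (x j) Δ ^ 3 * dot (x j) wt
        + (3/(n:ℝ)) * ∑ j, dot (x j) Δ ^ 2 * dot (x j) wt * dot (x j) β
        - (1/(n:ℝ)) * ∑ j, ε j * dot (x j) βt * dot (x j) wt := by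
  intro y Δ βhat
  have hΔ : ∀ j, dot (x j) Δ = dot (x j) βt - dot (x j) β := fun j => dot_sub' _ _ _
  have hw : ∀ j, dot (x j) (wt - w) = dot (x j) wt - dot (x j) w := fun j => dot_sub' _ _ _
  simp only [βhat, dot_grad, Pi.sub_apply, Δ, y, hΔ, hw]
  have main : ∑ j, ((dot (x j) βt ^ 2 - (dot (x j) β ^ 2 + ε j)) * dot (x j) βt * dot (x j) wt)
      = ∑ j, (2 * ((dot (x j) βt - dot (x j) β) * dot (x j) w * dot (x j) β ^ 2)
          + 2 * ((dot (x j) βt - dot (x j) β) * (dot (x j) wt - dot (x j) w) * dot (x j) β ^ 2)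
          + (dot (x j) βt - dot (x j) β) ^ 3 * dot (x j) wt
          + 3 * ((dot (x j) βt - dot (x j) β) ^ 2 * dot (x j) wt * dot (x j) β)
          - ε j * dot (x j) βt * dot (x j) wt) :=
    Finset.sum_congr rfl (fun j _ => by ring)
  rw [main]
  simp only [Finset.sum_add_distrib, Finset.sum_sub_distrib, ← Finset.mul_sum, mul_add, mul_sub]
  ring
end
end

section
/- Let n, p be positive integers, δ > 0, S̄ ⊆ {1,…,p}, and x_1,…,x_n ∈ ℝ^p, β ∈ ℝ^p with β ≠ 0, Δ ∈ ℝ^p, k ∈ {1,…,p}. Let w_k(β) = −(1/2)(‖β‖₂² I + 2ββᵀ)^{-1} e_k, and suppose supp(Δ) ⊆ S̄, supp(w_k(β)) ⊆ S̄, supp(β) ⊆ S̄. If the operator norm bound ‖ (1/n) Σ_{j=1}^n (x_jᵀβ)² x_{j,S̄} x_{j,S̄}ᵀ − (‖β‖₂² I_{S̄} + 2ββᵀ) ‖ ≤ δ‖β‖₂² holds, then | e_kᵀΔ + (2/n) Σ_{j=1}^n (x_jᵀΔ)(x_jᵀ w_k(β))(x_jᵀβ)² | ≤ 2δ ‖β‖₂²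 ‖Δ‖₂ ‖w_k(β)‖₂. -/
open MeasureTheory ProbabilityTheory

noncomputable section

-- auxiliary lemmas
lemma nrm_sq {p : ℕ} (v : Fin p → ℝ) : nrm v ^ 2 = ∑ i, (v i)^2 := by
  rw [nrm, Real.sq_sqrt]
  positivity

lemma nrm_nonneg {p : ℕ} (v : Fin p → ℝ) : 0 ≤ nrm v := Real.sqrt_nonneg _

lemma nrm_sq_pos {p : ℕ} {v : Fin p → ℝ} (hv : v ≠ 0) : 0 < nrm v ^ 2 := by
  rw [nrm_sq]
  obtain ⟨i, hi⟩ := Function.ne_iff.mp hv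
  exact Finset.sum_pos' (fun j _ => sq_nonneg _)
    ⟨i, Finset.mem_univ i, sq_pos_of_ne_zero hi⟩

lemma vecMulVec_mulVec' {p : ℕ} (u v w : Fin p → ℝ) :
    (Matrix.vecMulVec u v).mulVec w = (dotProduct v w) • u := by
  ext i
  simp only [Matrix.mulVec, dotProduct, Matrix.vecMulVec_apply, Pi.smul_apply,
    smul_eq_mul, Finset.sum_mul]
  exact Finset.sum_congr rfl (fun j _ => by ring)

lemma dot_vecMulVec_mulVec {p : ℕ} (a u v w : Fin p → ℝ) :
    dotProduct a ((Matrix.vecMulVec u v).mulVec w) = dotProduct v w * dot a u := by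
  rw [vecMulVec_mulVec', dotProduct_smul, smul_eq_mul, dot]
  rfl

lemma fisherM_mulVec {p : ℕ} (b : Fin p → ℝ) (v : Fin p → ℝ) :
    (fisherM b).mulVec v = (nrm b ^ 2) • v + (2 * dotProduct b v) • b := by
  rw [fisherM, Matrix.add_mulVec, Matrix.smul_mulVec, Matrix.one_mulVec,
    Matrix.smul_mulVec, vecMulVec_mulVec', smul_smul]

lemma fisherM_posDef {p : ℕ} {b : Fin p → ℝ} (hb : b ≠ 0) : (fisherM b).PosDef := by
  rw [Matrix.posDef_iff_dotProduct_mulVec]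
  constructor
  · show Matrix.conjTranspose (fisherM b) = fisherM b
    ext i j
    simp only [fisherM, Matrix.conjTranspose_apply, Matrix.add_apply, Matrix.smul_apply,
      Matrix.one_apply, Matrix.vecMulVec_apply, star_trivial, smul_eq_mul]
    by_cases h : i = j
    · subst h; ring
    · rw [if_neg h, if_neg (Ne.symm h)]; ring
  · intro v hv
    rw [fisherM_mulVec]
    simp only [star_trivial, dotProduct_add, dotProduct_smul, smul_eq_mul]
    have h1 : dotProduct v v = ∑ i, (v i)^2 := by
      simp [dotProduct, sq]
    have h2 : dotProduct v b = dotProduct b v := dotProduct_comm _ _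
    rw [h1, h2]
    have hvpos : (0:ℝ) < ∑ i, (v i)^2 := by
      obtain ⟨i, hi⟩ := Function.ne_iff.mp hv
      exact Finset.sum_pos' (fun j _ => sq_nonneg _)
        ⟨i, Finset.mem_univ i, sq_pos_of_ne_zero hi⟩
    have hbpos := nrm_sq_pos hb
    nlinarith [sq_nonneg (dotProduct b v)]

lemma fisherM_mulVec_wvec {p : ℕ} {b : Fin p → ℝ} (hb : b ≠ 0) (k : Fin p) :
    (fisherM b).mulVec (wvec b k) = (-(1/2) : ℝ) • (Pi.single k 1 : Fin p → ℝ) := by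
  unfold wvec
  have h1 : (fisherM b).mulVec ((-(1/2):ℝ) • (fisherM b)⁻¹.mulVec (Pi.single k 1))
      = (-(1/2):ℝ) • (fisherM b).mulVec ((fisherM b)⁻¹.mulVec (Pi.single k 1)) :=
    Matrix.mulVec_smul _ _ _
  rw [h1, Matrix.mulVec_mulVec,
    Matrix.mul_nonsing_inv _ ((Matrix.isUnit_iff_isUnit_det _).mp (fisherM_posDef hb).isUnit),
    Matrix.one_mulVec]

lemma abs_dot_mulVec_le {p : ℕ} (A : Matrix (Fin p) (Fin p) ℝ) (u v : Fin p → ℝ) :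
    |dotProduct u (A.mulVec v)| ≤ opNorm A * nrm u * nrm v := by
  set u' : EuclideanSpace ℝ (Fin p) := (WithLp.equiv 2 _).symm u with hu'
  set v' : EuclideanSpace ℝ (Fin p) := (WithLp.equiv 2 _).symm v with hv'
  have hnu : ‖u'‖ = nrm u := by
    rw [EuclideanSpace.norm_eq, nrm]
    congr 1
    exact Finset.sum_congr rfl (fun i _ => by rw [Real.norm_eq_abs, sq_abs]; rfl)
  have hnv : ‖v'‖ = nrm v := by
    rw [EuclideanSpace.norm_eq, nrm]
    congr 1
    exact Finset.sum_congr rfl (fun i _ => by rw [Real.norm_eq_abs, sq_abs]; rfl)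
  have hinner : (inner ℝ u' ((Matrix.toEuclideanLin A) v') : ℝ)
      = dotProduct u (A.mulVec v) := by
    rw [Matrix.toEuclideanLin_apply]
    simp only [PiLp.inner_apply, RCLike.inner_apply, conj_trivial]
    exact Finset.sum_congr rfl (fun i _ => mul_comm _ _)
  calc |dotProduct u (A.mulVec v)|
      = |(inner ℝ u' ((Matrix.toEuclideanLin A) v') : ℝ)| := by rw [hinner]
    _ ≤ ‖u'‖ * ‖(Matrix.toEuclideanLin A) v'‖ := abs_real_inner_le_norm _ _
    _ ≤ ‖u'‖ * (opNorm A * ‖v'‖) := by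
        apply mul_le_mul_of_nonneg_left _ (norm_nonneg _)
        exact (LinearMap.toContinuousLinearMap (Matrix.toEuclideanLin A)).le_opNorm v'
    _ = opNorm A * nrm u * nrm v := by rw [hnu, hnv]; ring

lemma sum_mulVec' {p : ℕ} {ι : Type*} (s : Finset ι) (A : ι → Matrix (Fin p) (Fin p) ℝ)
    (w : Fin p → ℝ) : (∑ j ∈ s, A j).mulVec w = ∑ j ∈ s, (A j).mulVec w := by
  ext i
  simp only [Matrix.mulVec, dotProduct, Finset.sum_apply, Matrix.sum_apply,
    Finset.sum_mul]
  exact Finset.sum_comm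

lemma dot_sum' {p : ℕ} {ι : Type*} (s : Finset ι) (u : Fin p → ℝ) (f : ι → Fin p → ℝ) :
    dotProduct u (∑ j ∈ s, f j) = ∑ j ∈ s, dotProduct u (f j) := by
  simp only [dotProduct, Finset.sum_apply, Finset.mul_sum]
  exact Finset.sum_comm


/-- Deterministic bound on the first two terms of the error decomposition,
conditional on the empirical-Hessian concentration event:
`|e_kᵀΔ + (2/n) ∑ⱼ (xⱼᵀΔ)(xⱼᵀw_k(β))(xⱼᵀβ)²| ≤ 2δ‖β‖₂²‖Δ‖₂‖w_k(β)‖₂`. -/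
theorem stmt_12 {n p : ℕ} (hn : 0 < n) (δ : ℝ) (hδ : 0 < δ) (Sb : Finset (Fin p))
    (x : Fin n → Fin p → ℝ) (β Δ : Fin p → ℝ) (hβ : β ≠ 0) (k : Fin p)
    (hΔS : Function.support Δ ⊆ (Sb : Set (Fin p)))
    (hwS : Function.support (wvec β k) ⊆ (Sb : Set (Fin p)))
    (hβS : Function.support β ⊆ (Sb : Set (Fin p)))
    (hop : opNorm ((1/(n:ℝ)) • ∑ j, (dot (x j) β ^ 2) •
          Matrix.vecMulVec (restr Sb (x j)) (restr Sb (x j))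
        - ((nrm β ^ 2) • Matrix.diagonal (fun i => if i ∈ Sb then (1:ℝ) else 0)
            + (2:ℝ) • Matrix.vecMulVec β β))
      ≤ δ * nrm β ^ 2) :
    |Δ k + (2/(n:ℝ)) * ∑ j, dot (x j) Δ * dot (x j) (wvec β k) * dot (x j) β ^ 2|
      ≤ 2 * δ * nrm β ^ 2 * nrm Δ * nrm (wvec β k) := by
  set w : Fin p → ℝ := wvec β k with hw
  set M : Matrix (Fin p) (Fin p) ℝ :=
    (1/(n:ℝ)) • ∑ j, (dot (x j) β ^ 2) •
          Matrix.vecMulVec (restr Sb (x j)) (restr Sb (x j))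
        - ((nrm β ^ 2) • Matrix.diagonal (fun i => if i ∈ Sb then (1:ℝ) else 0)
            + (2:ℝ) • Matrix.vecMulVec β β) with hM
  have hΔ0 : ∀ i, i ∉ Sb → Δ i = 0 := by
    intro i hi
    by_contra h
    exact hi (hΔS (Function.mem_support.mpr h))
  have hw0 : ∀ i, i ∉ Sb → w i = 0 := by
    intro i hi
    by_contra h
    exact hi (hwS (Function.mem_support.mpr h))
  -- dot products with restricted vectors
  have f1 : ∀ j, dot Δ (restr Sb (x j)) = dot (x j) Δ := by
    intro j
    refine Finset.sum_congr rfl fun i _ => ?_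
    by_cases hi : i ∈ Sb
    · simp [restr, hi, mul_comm]
    · simp [restr, hi, hΔ0 i hi]
  have f2 : ∀ j, dot (restr Sb (x j)) w = dot (x j) w := by
    intro j
    refine Finset.sum_congr rfl fun i _ => ?_
    by_cases hi : i ∈ Sb
    · simp [restr, hi]
    · simp [restr, hi, hw0 i hi]
  -- the Fisher part
  have hFish : dotProduct Δ
      (((nrm β ^ 2) • Matrix.diagonal (fun i => if i ∈ Sb then (1:ℝ) else 0)
          + (2:ℝ) • Matrix.vecMulVec β β).mulVec w) = -(1/2) * Δ k := by
    have hdiag : dotProduct Δ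
        ((Matrix.diagonal (fun i => if i ∈ Sb then (1:ℝ) else 0)).mulVec w)
        = dotProduct Δ w := by
      refine Finset.sum_congr rfl fun i _ => ?_
      rw [Matrix.mulVec_diagonal]
      by_cases hi : i ∈ Sb
      · simp [hi]
      · simp [hi, hΔ0 i hi]
    have hF : dotProduct Δ ((fisherM β).mulVec w) = -(1/2) * Δ k := by
      rw [hw, fisherM_mulVec_wvec hβ k, dotProduct_smul, smul_eq_mul,
        dotProduct_single, mul_one]
    rw [Matrix.add_mulVec, dotProduct_add, Matrix.smul_mulVec,
      dotProduct_smul, smul_eq_mul, hdiag]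
    rw [fisherM, Matrix.add_mulVec, dotProduct_add, Matrix.smul_mulVec,
      Matrix.one_mulVec, dotProduct_smul, smul_eq_mul] at hF
    exact hF
  -- the empirical part
  have hEmp : dotProduct Δ
      (((1/(n:ℝ)) • ∑ j, (dot (x j) β ^ 2) •
          Matrix.vecMulVec (restr Sb (x j)) (restr Sb (x j))).mulVec w)
      = (1/(n:ℝ)) * ∑ j, dot (x j) Δ * dot (x j) w * dot (x j) β ^ 2 := by
    rw [Matrix.smul_mulVec, dotProduct_smul, smul_eq_mul, sum_mulVec',
      dot_sum']
    congr 1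
    refine Finset.sum_congr rfl fun j _ => ?_
    rw [Matrix.smul_mulVec, dotProduct_smul, smul_eq_mul,
      dot_vecMulVec_mulVec]
    show dot (x j) β ^ 2 * (dot (restr Sb (x j)) w * dot Δ (restr Sb (x j))) = _
    rw [f1, f2]
    ring
  have key : Δ k + (2/(n:ℝ)) * ∑ j, dot (x j) Δ * dot (x j) w * dot (x j) β ^ 2
      = 2 * dotProduct Δ (M.mulVec w) := by
    rw [hM, Matrix.sub_mulVec, dotProduct_sub, hEmp, hFish]
    ring
  rw [key]
  rw [abs_mul, abs_two]
  have hb1 := abs_dot_mulVec_le M Δ w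
  have hb2 : opNorm M * nrm Δ * nrm w ≤ δ * nrm β ^ 2 * (nrm Δ * nrm w) := by
    rw [mul_assoc]
    exact mul_le_mul_of_nonneg_right hop (mul_nonneg (nrm_nonneg _) (nrm_nonneg _))
  nlinarith [nrm_nonneg Δ, nrm_nonneg w, abs_nonneg (dotProduct Δ (M.mulVec w))]
end
end

section
/- Let n, p be positive integers, δ > 0, S̄ ⊆ {1,…,p}, x_1,…,x_n ∈ ℝ^p, and Δ, w̃, β ∈ ℝ^p with supp(Δ) ⊆ S̄, supp(w̃) ⊆ S̄ and supp(β) ⊆ S̄. If the operator norm bound ‖ (1/n) Σ_{j=1}^n (x_jᵀΔ)² x_{j,S̄} x_{j,S̄}ᵀ − (‖Δ‖₂² I_{S̄} + 2ΔΔᵀ) ‖ ≤ δ‖Δ‖₂² holds, then | (3/n) Σ_{j=1}^n (x_jᵀΔ)² (x_jᵀ w̃)(x_jᵀβ) | ≤ 9 ‖Δ‖₂² ‖w̃‖₂ ‖β‖₂ + 3δ ‖Δ‖₂² ‖w̃‖₂ ‖β‖₂. -/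
open MeasureTheory ProbabilityTheory

noncomputable section

lemma nrm_eq {p : ℕ} (v : Fin p → ℝ) : nrm v = ‖(WithLp.equiv 2 (Fin p → ℝ)).symm v‖ := by
  rw [EuclideanSpace.norm_eq]
  simp [nrm, sq_abs]

lemma dot_eq_inner {p : ℕ} (u v : Fin p → ℝ) :
    dot u v = @inner ℝ (EuclideanSpace ℝ (Fin p)) _ ((WithLp.equiv 2 _).symm u)
      ((WithLp.equiv 2 _).symm v) := by
  simp [dot, PiLp.inner_apply, mul_comm]

lemma abs_dot_le {p : ℕ} (u v : Fin p → ℝ) : |dot u v| ≤ nrm u * nrm v := by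
  rw [dot_eq_inner, nrm_eq, nrm_eq]
  exact abs_real_inner_le_norm _ _

lemma quad_bound {p : ℕ} (A : Matrix (Fin p) (Fin p) ℝ) (u v : Fin p → ℝ) :
    |dot u (A.mulVec v)| ≤ opNorm A * nrm u * nrm v := by
  rw [dot_eq_inner, nrm_eq, nrm_eq]
  have h1 : (WithLp.equiv 2 (Fin p → ℝ)).symm (A.mulVec v)
      = (LinearMap.toContinuousLinearMap (Matrix.toEuclideanLin A))
          ((WithLp.equiv 2 _).symm v) := by
    simp [Matrix.toEuclideanLin_apply]
  rw [h1]
  calc |@inner ℝ (EuclideanSpace ℝ (Fin p)) _ _ _|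
      ≤ ‖(WithLp.equiv 2 (Fin p → ℝ)).symm u‖ *
        ‖(LinearMap.toContinuousLinearMap (Matrix.toEuclideanLin A))
          ((WithLp.equiv 2 (Fin p → ℝ)).symm v)‖ := abs_real_inner_le_norm _ _
    _ ≤ ‖(WithLp.equiv 2 (Fin p → ℝ)).symm u‖ *
        (opNorm A * ‖(WithLp.equiv 2 (Fin p → ℝ)).symm v‖) := by
        gcongr; exact (LinearMap.toContinuousLinearMap (Matrix.toEuclideanLin A)).le_opNorm _
    _ = opNorm A * ‖(WithLp.equiv 2 (Fin p → ℝ)).symm u‖ *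
        ‖(WithLp.equiv 2 (Fin p → ℝ)).symm v‖ := by ring

lemma quad_expand {p : ℕ} (M : Matrix (Fin p) (Fin p) ℝ) (u v : Fin p → ℝ) :
    dot u (M.mulVec v) = ∑ i, ∑ k, u i * (M i k * v k) := by
  simp [dot, Matrix.mulVec, dotProduct, Finset.mul_sum]

lemma quad_smul {p : ℕ} (c : ℝ) (M : Matrix (Fin p) (Fin p) ℝ) (u v : Fin p → ℝ) :
    dot u ((c • M).mulVec v) = c * dot u (M.mulVec v) := by
  simp only [quad_expand, Matrix.smul_apply, smul_eq_mul, Finset.mul_sum]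
  exact Finset.sum_congr rfl fun i _ => Finset.sum_congr rfl fun k _ => by ring

lemma quad_sub {p : ℕ} (M N : Matrix (Fin p) (Fin p) ℝ) (u v : Fin p → ℝ) :
    dot u ((M - N).mulVec v) = dot u (M.mulVec v) - dot u (N.mulVec v) := by
  simp only [quad_expand, Matrix.sub_apply, ← Finset.sum_sub_distrib]
  exact Finset.sum_congr rfl fun i _ => Finset.sum_congr rfl fun k _ => by ring

lemma quad_add {p : ℕ} (M N : Matrix (Fin p) (Fin p) ℝ) (u v : Fin p → ℝ) :
    dot u ((M + N).mulVec v) = dot u (M.mulVec v) + dot u (N.mulVec v) := by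
  simp only [quad_expand, Matrix.add_apply, ← Finset.sum_add_distrib]
  exact Finset.sum_congr rfl fun i _ => Finset.sum_congr rfl fun k _ => by ring

lemma quad_vecMulVec {p : ℕ} (a b u v : Fin p → ℝ) :
    dot u ((Matrix.vecMulVec a b).mulVec v) = dot u a * dot b v := by
  simp only [dot, Matrix.mulVec, dotProduct, Matrix.vecMulVec_apply, Finset.mul_sum,
    Finset.sum_mul]
  rw [Finset.sum_comm]
  exact Finset.sum_congr rfl fun i _ => Finset.sum_congr rfl fun k _ => by ring

def quadL {p : ℕ} (u v : Fin p → ℝ) : Matrix (Fin p) (Fin p) ℝ →ₗ[ℝ] ℝ where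
  toFun M := dot u (M.mulVec v)
  map_add' M N := quad_add M N u v
  map_smul' c M := quad_smul c M u v

lemma quad_sum {p m : ℕ} (M : Fin m → Matrix (Fin p) (Fin p) ℝ) (u v : Fin p → ℝ) :
    dot u ((∑ j, M j).mulVec v) = ∑ j, dot u ((M j).mulVec v) :=
  map_sum (quadL u v) M Finset.univ

lemma quad_diag {p : ℕ} (Sb : Finset (Fin p)) (u v : Fin p → ℝ)
    (hv : Function.support v ⊆ (Sb : Set (Fin p))) :
    dot u ((Matrix.diagonal (fun i => if i ∈ Sb then (1:ℝ) else 0)).mulVec v) = dot u v := by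
  unfold dot
  refine Finset.sum_congr rfl fun i _ => ?_
  rw [Matrix.mulVec_diagonal]
  by_cases h : i ∈ Sb
  · simp [h]
  · have : v i = 0 := by by_contra hv0; exact h (hv hv0)
    simp [this]

lemma dot_comm {p : ℕ} (u v : Fin p → ℝ) : dot u v = dot v u := by
  unfold dot; exact Finset.sum_congr rfl fun i _ => mul_comm _ _

lemma restr_dot {p : ℕ} (Sb : Finset (Fin p)) (u w : Fin p → ℝ)
    (hw : Function.support w ⊆ (Sb : Set (Fin p))) :
    dot (restr Sb u) w = dot u w := by
  unfold dot restr
  refine Finset.sum_congr rfl fun i _ => ?_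
  by_cases h : i ∈ Sb
  · simp [h]
  · have : w i = 0 := by by_contra hw0; exact h (hw hw0)
    simp [this]

/-- Deterministic bound on the quadratic error term, conditional on the
empirical-Hessian concentration event for `Δ`:
`|(3/n) ∑ⱼ (xⱼᵀΔ)²(xⱼᵀw̃)(xⱼᵀβ)| ≤ 9‖Δ‖₂²‖w̃‖₂‖β‖₂ + 3δ‖Δ‖₂²‖w̃‖₂‖β‖₂`. -/
theorem stmt_14 {n p : ℕ} (hn : 0 < n) (δ : ℝ) (hδ : 0 < δ) (Sb : Finset (Fin p))
    (x : Fin n → Fin p → ℝ) (Δ wt β : Fin p → ℝ)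
    (hΔS : Function.support Δ ⊆ (Sb : Set (Fin p)))
    (hwS : Function.support wt ⊆ (Sb : Set (Fin p)))
    (hβS : Function.support β ⊆ (Sb : Set (Fin p)))
    (hop : opNorm ((1/(n:ℝ)) • ∑ j, (dot (x j) Δ ^ 2) •
          Matrix.vecMulVec (restr Sb (x j)) (restr Sb (x j))
        - ((nrm Δ ^ 2) • Matrix.diagonal (fun i => if i ∈ Sb then (1:ℝ) else 0)
            + (2:ℝ) • Matrix.vecMulVec Δ Δ))
      ≤ δ * nrm Δ ^ 2) :
    |(3/(n:ℝ)) * ∑ j, dot (x j) Δ ^ 2 * dot (x j) wt * dot (x j) β|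
      ≤ 9 * nrm Δ ^ 2 * nrm wt * nrm β + 3 * δ * nrm Δ ^ 2 * nrm wt * nrm β := by
  set A : Matrix (Fin p) (Fin p) ℝ := (1/(n:ℝ)) • ∑ j, (dot (x j) Δ ^ 2) •
      Matrix.vecMulVec (restr Sb (x j)) (restr Sb (x j)) with hA
  set M : Matrix (Fin p) (Fin p) ℝ := (nrm Δ ^ 2) •
      Matrix.diagonal (fun i => if i ∈ Sb then (1:ℝ) else 0)
      + (2:ℝ) • Matrix.vecMulVec Δ Δ with hM
  -- the quadratic form of A is the sum
  have hAq : dot wt (A.mulVec β)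
      = (1/(n:ℝ)) * ∑ j, dot (x j) Δ ^ 2 * dot (x j) wt * dot (x j) β := by
    rw [hA, quad_smul, quad_sum]
    congr 1
    refine Finset.sum_congr rfl fun j _ => ?_
    rw [quad_smul, quad_vecMulVec, dot_comm wt, restr_dot Sb (x j) wt hwS,
      restr_dot Sb (x j) β hβS]
    ring
  have hMq : dot wt (M.mulVec β)
      = nrm Δ ^ 2 * dot wt β + 2 * (dot wt Δ * dot Δ β) := by
    rw [hM, quad_add, quad_smul, quad_smul, quad_diag Sb wt β hβS, quad_vecMulVec]
  have hdec : dot wt (A.mulVec β) = dot wt ((A - M).mulVec β) + dot wt (M.mulVec β) := by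
    rw [quad_sub]; ring
  -- bounds
  have hE : |dot wt ((A - M).mulVec β)| ≤ δ * nrm Δ ^ 2 * (nrm wt * nrm β) := by
    calc |dot wt ((A - M).mulVec β)| ≤ opNorm (A - M) * nrm wt * nrm β := quad_bound _ _ _
      _ ≤ δ * nrm Δ ^ 2 * (nrm wt * nrm β) := by
          rw [mul_assoc]
          exact mul_le_mul_of_nonneg_right hop (mul_nonneg (nrm_nonneg _) (nrm_nonneg _))
  have h1 := abs_dot_le wt β
  have h2 := abs_dot_le wt Δ
  have h3 := abs_dot_le Δ β
  have h23 : |dot wt Δ * dot Δ β| ≤ nrm Δ ^ 2 * (nrm wt * nrm β) := by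
    rw [abs_mul]
    calc |dot wt Δ| * |dot Δ β| ≤ (nrm wt * nrm Δ) * (nrm Δ * nrm β) :=
          mul_le_mul h2 h3 (abs_nonneg _) (mul_nonneg (nrm_nonneg _) (nrm_nonneg _))
      _ = nrm Δ ^ 2 * (nrm wt * nrm β) := by ring
  have key : (3/(n:ℝ)) * ∑ j, dot (x j) Δ ^ 2 * dot (x j) wt * dot (x j) β
      = 3 * dot wt (A.mulVec β) := by
    rw [hAq]; ring
  rw [key, hdec, hMq]
  have hΔsq : (0:ℝ) ≤ nrm Δ ^ 2 := sq_nonneg _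
  have hwβ : (0:ℝ) ≤ nrm wt * nrm β := mul_nonneg (nrm_nonneg _) (nrm_nonneg _)
  rw [abs_le] at hE h1 h23 ⊢
  constructor
  · nlinarith [mul_le_mul_of_nonneg_left h1.2 hΔsq, mul_le_mul_of_nonneg_left h1.1 hΔsq]
  · nlinarith [mul_le_mul_of_nonneg_left h1.2 hΔsq, mul_le_mul_of_nonneg_left h1.1 hΔsq]
end
end
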